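/- Let τ_H be any strong stationary time for the chain Q on H, let τ_H(v), v∈G, be conditionally independent copies of τ_H run on the lamp graphs H_v given the local times, and define τ⋄ := inf{t : ∀v∈G, τ_H(v) ≤ L_v(t)}. Then for any starting state (f₀,x₀) and any (f,x), P_{(f₀,x₀)}[X⋄_t = (f,x), τ⋄ = t] = (∏_{v∈G} π_H(f_v)) · P_{(f₀,x₀)}[X_t = x, τ⋄ = t]. Moreover, if τ_H has a halting state h(z) for every initial state z∈H, then for every y∈G the configuration ((h(f_v(0)))_{v∈G}, y) is a halting state for τ⋄ and initial state (f₀,x₀). -/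
import Mathlib


open Finset

noncomputable section

open scoped Classical

section MarkovDefs

variable {V : Type*} [Fintype V] [DecidableEq V] [Nonempty V]
variable {W : Type*} [Fintype W] [DecidableEq W] [Nonempty W]

/-- `P` is a stochastic (transition) matrix. -/
def IsTransitionMatrix (P : Matrix V V ℝ) : Prop :=
  (∀ x y, 0 ≤ P x y) ∧ ∀ x, ∑ y, P x y = 1

/-- `π` is a (positive) stationary distribution for `P`. -/
def IsStationaryDist (P : Matrix V V ℝ) (π : V → ℝ) : Prop :=
  (∀ x, 0 < π x) ∧ (∑ x, π x = 1) ∧ ∀ y, ∑ x, π x * P x y = π y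

/-- Reversibility (detailed balance) of `P` with respect to `π`. -/
def IsReversibleMC (P : Matrix V V ℝ) (π : V → ℝ) : Prop :=
  ∀ x y, π x * P x y = π y * P y x

/-- Irreducibility of the chain `P`. -/
def IsIrreducibleMC (P : Matrix V V ℝ) : Prop :=
  ∀ x y, ∃ t : ℕ, 0 < (P ^ t) x y

/-- Aperiodicity of the chain `P`. -/
def IsAperiodicMC (P : Matrix V V ℝ) : Prop :=
  ∀ x : V, ∃ N : ℕ, ∀ n, N ≤ n → 0 < (P ^ n) x x

/-- The chain `P` is lazy. -/
def IsLazyMC (P : Matrix V V ℝ) : Prop := ∀ x, (1:ℝ)/2 ≤ P x x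

/-- The uniform distribution on a finite type. -/
def unifDist (α : Type*) [Fintype α] : α → ℝ := fun _ => (Fintype.card α : ℝ)⁻¹

/-- The second largest eigenvalue of a transition matrix: the supremum of the
eigenvalues different from `1`. -/
def secondEigenvalue (P : Matrix V V ℝ) : ℝ :=
  sSup {r : ℝ | r ≠ 1 ∧ ∃ φ : V → ℝ, φ ≠ 0 ∧ P.mulVec φ = r • φ}

/-- Relaxation time `1/(1-λ₂)`. -/
def relaxationTime (P : Matrix V V ℝ) : ℝ := 1 / (1 - secondEigenvalue P)

/-- Worst-case total variation distance from stationarity at time `t`. -/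
def tvFromStat (P : Matrix V V ℝ) (π : V → ℝ) (t : ℕ) : ℝ :=
  ⨆ x : V, (1/2) * ∑ y, |(P ^ t) x y - π y|

/-- The `ε`-mixing time (in total variation). -/
def mixingTime (P : Matrix V V ℝ) (π : V → ℝ) (ε : ℝ) : ℕ :=
  sInf {t : ℕ | tvFromStat P π t ≤ ε}

/-- Separation distance from initial state `x` at time `t`. -/
def sepDist (P : Matrix V V ℝ) (π : V → ℝ) (x : V) (t : ℕ) : ℝ :=
  ⨆ y : V, (1 - (P ^ t) x y / π y)

/-- Probability that the chain started at `x₀` follows the path `p`. -/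
def pathWeight (P : Matrix V V ℝ) (x₀ : V) {t : ℕ} (p : Fin (t+1) → V) : ℝ :=
  (if p 0 = x₀ then (1:ℝ) else 0) * ∏ i : Fin t, P (p i.castSucc) (p i.succ)

/-- `P_x[τ_y > t]`: the walk started at `x` avoids `y` up to time `t`. -/
def hitGT (P : Matrix V V ℝ) (x y : V) (t : ℕ) : ℝ :=
  ∑ p : Fin (t+1) → V, if ∀ i, p i ≠ y then pathWeight P x p else 0

/-- Expected hitting time `E_x[τ_y]`. -/
def expHit (P : Matrix V V ℝ) (x y : V) : ℝ := ∑' t : ℕ, hitGT P x y t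

/-- Maximal expected hitting time `t_hit`. -/
def maxHitTime (P : Matrix V V ℝ) : ℝ := ⨆ x : V, ⨆ y : V, expHit P x y

/-- `P_x[τ_cov > t]`: the walk started at `x` has not visited every state by time `t`. -/
def coverGT (P : Matrix V V ℝ) (x : V) (t : ℕ) : ℝ :=
  ∑ p : Fin (t+1) → V, if Function.Surjective p then 0 else pathWeight P x p

/-- Expected cover time `E_x[τ_cov]`. -/
def expCover (P : Matrix V V ℝ) (x : V) : ℝ := ∑' t : ℕ, coverGT P x t

/-- The cover time `t_cov`. -/
def coverTime (P : Matrix V V ℝ) : ℝ := ⨆ x : V, expCover P x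

/-- `P_w[R(w) > t]`: tail of the first return time to `w`. -/
def returnGT (P : Matrix V V ℝ) (w : V) (t : ℕ) : ℝ :=
  ∑ p : Fin (t+1) → V, if ∀ i, i ≠ 0 → p i ≠ w then pathWeight P w p else 0

/-- The degree of a vertex. -/
def graphDeg (G : SimpleGraph V) (x : V) : ℕ := (univ.filter fun y => G.Adj x y).card

/-- `G` is a regular graph. -/
def IsRegularGraph (G : SimpleGraph V) : Prop := ∃ d, ∀ x, graphDeg G x = d

/-- The lazy simple random walk on `G`. -/
def lazySRW (G : SimpleGraph V) : Matrix V V ℝ := fun x y =>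
  if x = y then 1/2 else if G.Adj x y then 1 / (2 * (graphDeg G x : ℝ)) else 0

/-- The generalized lamplighter (wreath product) transition matrix on `(V → W) × V`:
move the lamplighter according to `P` and refresh the lamps at the departure and
arrival vertices independently according to `Q` (a double `Q`-update upon holding). -/
def lamplighter (P : Matrix V V ℝ) (Q : Matrix W W ℝ) :
    Matrix ((V → W) × V) ((V → W) × V) ℝ := fun s s' =>
  if s.2 = s'.2 then
    if ∀ z, z ≠ s.2 → s.1 z = s'.1 z then P s.2 s'.2 * (Q * Q) (s.1 s.2) (s'.1 s.2) else 0
  else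
    if ∀ z, z ≠ s.2 → z ≠ s'.2 → s.1 z = s'.1 z then
      P s.2 s'.2 * Q (s.1 s.2) (s'.1 s.2) * Q (s.1 s'.2) (s'.1 s'.2)
    else 0

/-- The product stationary distribution `π⋄((f,x)) = π_G(x) ∏_v π_H(f_v)`. -/
def lampStat (πG : V → ℝ) (πH : W → ℝ) : ((V → W) × V) → ℝ :=
  fun s => πG s.2 * ∏ v, πH (s.1 v)

/-- The local time `L_v(t) = 2 Σ_{i≤t} 1(X_i = v) - δ_{X_0,v} - δ_{X_t,v}`, i.e. the
number of lamp-moves at `v` along the base path `p` up to time `t`. -/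
def localTime {t : ℕ} (p : Fin (t+1) → V) (v : V) : ℕ :=
  2 * (univ.filter fun i => p i = v).card
    - (if p 0 = v then 1 else 0) - (if p (Fin.last t) = v then 1 else 0)

/-- Truncation (for `s ≤ t`) of a path to the time-interval `[0,s]`. -/
def truncPath {t : ℕ} (p : Fin (t+1) → V) (s : ℕ) : Fin (s+1) → V :=
  fun i => p ⟨min (i : ℕ) t, Nat.lt_succ_of_le (Nat.min_le_right _ _)⟩

/-- Extension of a finite path to all times (constant after time `n`). -/
def extendPath {n : ℕ} (z : Fin (n+1) → W) : ℕ → W :=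
  fun i => z ⟨min i n, Nat.lt_succ_of_le (Nat.min_le_right _ _)⟩

/-- The history (list of states) of the trajectory `z` up to time `k`. -/
def ruleHist (z : ℕ → W) (k : ℕ) : List W := List.ofFn fun i : Fin (k+1) => z (i : ℕ)

/-- A randomized stopping rule: `r h` is the conditional probability of stopping
right now given that the history so far is `h` and we have not yet stopped. -/
def IsStoppingRule (r : List W → ℝ) : Prop := ∀ h, 0 ≤ r h ∧ r h ≤ 1

/-- `P[τ ≤ m | trajectory z]` for the stopping rule `r`. -/
def stopBy (r : List W → ℝ) (z : ℕ → W) (m : ℕ) : ℝ :=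
  1 - ∏ k ∈ Finset.range (m+1), (1 - r (ruleHist z k))

/-- `P[τ < m | trajectory z]` for the stopping rule `r`. -/
def stopLT (r : List W → ℝ) (z : ℕ → W) (m : ℕ) : ℝ :=
  1 - ∏ k ∈ Finset.range m, (1 - r (ruleHist z k))

/-- `P_{w₀}[X_t = y, τ = t]` for the chain `Q` and the stopping rule `r`. -/
def stopAtProb (Q : Matrix W W ℝ) (r : List W → ℝ) (w₀ : W) (t : ℕ) (y : W) : ℝ :=
  ∑ z : Fin (t+1) → W,
    if z (Fin.last t) = y then
      pathWeight Q w₀ z * (∏ k ∈ Finset.range t, (1 - r (ruleHist (extendPath z) k))) *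
        r (ruleHist (extendPath z) t)
    else 0

/-- `P_{w₀}[X_t = y, τ > t]` for the chain `Q` and the stopping rule `r`. -/
def notStopProbAt (Q : Matrix W W ℝ) (r : List W → ℝ) (w₀ : W) (t : ℕ) (y : W) : ℝ :=
  ∑ z : Fin (t+1) → W,
    if z (Fin.last t) = y then
      pathWeight Q w₀ z * ∏ k ∈ Finset.range (t+1), (1 - r (ruleHist (extendPath z) k))
    else 0

/-- `r` is (the stopping rule of) a strong stationary time for `(Q, π)`. -/
def IsSST (Q : Matrix W W ℝ) (π : W → ℝ) (r : List W → ℝ) : Prop :=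
  IsStoppingRule r ∧ ∀ w₀ t y, stopAtProb Q r w₀ t y = π y * ∑ y', stopAtProb Q r w₀ t y'

/-- `h` is a halting state for the stopping rule `r` and initial state `w₀`:
being at `h` at time `t` implies having stopped. -/
def IsHaltingState (Q : Matrix W W ℝ) (r : List W → ℝ) (w₀ h : W) : Prop :=
  ∀ t, notStopProbAt Q r w₀ t h = 0

/-- A separation-optimal strong stationary time: its tail equals the separation
distance for every starting state. -/
def IsSepOptimal (Q : Matrix W W ℝ) (π : W → ℝ) (r : List W → ℝ) : Prop :=
  ∀ w₀ t, sepDist Q π w₀ t = ∑ y, notStopProbAt Q r w₀ t y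

/-! Joint description of the generalized lamplighter chain: a base path `p` on `V`
together with independent `Q`-trajectories `z v` on each lamp coordinate `v`; the lamp
configuration at time `s` reads off each `z v` at the local time `L_v(s)`. -/

/-- Weight of a joint configuration (base path, lamp trajectories). -/
def jointWeight (P : Matrix V V ℝ) (Q : Matrix W W ℝ) (f₀ : V → W) (x₀ : V) {t : ℕ}
    (p : Fin (t+1) → V) (z : V → (Fin (2*t+1) → W)) : ℝ :=
  pathWeight P x₀ p * ∏ v, pathWeight Q (f₀ v) (z v)

/-- The lamp configuration at time `s` along the joint path: `F_s(v) = Z_v(L_v(s))`. -/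
def lampAt {t : ℕ} (p : Fin (t+1) → V) (z : V → (Fin (2*t+1) → W)) (s : ℕ) (v : V) : W :=
  z v ⟨min (localTime (truncPath p s) v) (2*t), Nat.lt_succ_of_le (Nat.min_le_right _ _)⟩

/-- `P_{(f₀,x₀)}[X⋄_t = (f,x), τ⋄ ≤ s]`, where
`τ⋄ = inf{u : ∀ v, τ_H(v) ≤ L_v(u)}` is built from conditionally independent copies
`τ_H(v)` (with stopping rule `r`) on the lamp coordinates. -/
def tauDmdLEProb (P : Matrix V V ℝ) (Q : Matrix W W ℝ) (r : List W → ℝ)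
    (f₀ : V → W) (x₀ : V) (t s : ℕ) (f : V → W) (x : V) : ℝ :=
  ∑ p : Fin (t+1) → V, ∑ z : V → (Fin (2*t+1) → W),
    if p (Fin.last t) = x ∧ ∀ v, lampAt p z t v = f v then
      jointWeight P Q f₀ x₀ p z *
        ∏ v, stopBy r (extendPath (z v)) (localTime (truncPath p s) v)
    else 0

/-- `P_{(f₀,x₀)}[X⋄_t = (f,x), τ⋄ = t]`. -/
def tauDmdEqProb (P : Matrix V V ℝ) (Q : Matrix W W ℝ) (r : List W → ℝ)
    (f₀ : V → W) (x₀ : V) (t : ℕ) (f : V → W) (x : V) : ℝ :=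
  tauDmdLEProb P Q r f₀ x₀ t t f x -
    if t = 0 then 0 else tauDmdLEProb P Q r f₀ x₀ t (t-1) f x

/-- `P_{(f₀,x₀)}[X_t = x, τ⋄ ≤ s]` (base-walk marginal). -/
def tauDmdLEBase (P : Matrix V V ℝ) (Q : Matrix W W ℝ) (r : List W → ℝ)
    (f₀ : V → W) (x₀ : V) (t s : ℕ) (x : V) : ℝ :=
  ∑ p : Fin (t+1) → V, ∑ z : V → (Fin (2*t+1) → W),
    if p (Fin.last t) = x then
      jointWeight P Q f₀ x₀ p z *
        ∏ v, stopBy r (extendPath (z v)) (localTime (truncPath p s) v)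
    else 0

/-- `P_{(f₀,x₀)}[X_t = x, τ⋄ = t]` (base-walk marginal). -/
def tauDmdEqBase (P : Matrix V V ℝ) (Q : Matrix W W ℝ) (r : List W → ℝ)
    (f₀ : V → W) (x₀ : V) (t : ℕ) (x : V) : ℝ :=
  tauDmdLEBase P Q r f₀ x₀ t t x -
    if t = 0 then 0 else tauDmdLEBase P Q r f₀ x₀ t (t-1) x

/-- `P_{(f₀,x₀)}[τ⋄ > t]`. -/
def tauDmdGTProb (P : Matrix V V ℝ) (Q : Matrix W W ℝ) (r : List W → ℝ)
    (f₀ : V → W) (x₀ : V) (t : ℕ) : ℝ :=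
  ∑ p : Fin (t+1) → V, ∑ z : V → (Fin (2*t+1) → W),
    jointWeight P Q f₀ x₀ p z * (1 - ∏ v, stopBy r (extendPath (z v)) (localTime p v))

/-- `P_{(f₀,x₀)}[X⋄_t = (f,x), τ⋄ > t]`. -/
def tauDmdGTProbAt (P : Matrix V V ℝ) (Q : Matrix W W ℝ) (r : List W → ℝ)
    (f₀ : V → W) (x₀ : V) (t : ℕ) (f : V → W) (x : V) : ℝ :=
  ∑ p : Fin (t+1) → V, ∑ z : V → (Fin (2*t+1) → W),
    if p (Fin.last t) = x ∧ ∀ v, lampAt p z t v = f v then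
      jointWeight P Q f₀ x₀ p z * (1 - ∏ v, stopBy r (extendPath (z v)) (localTime p v))
    else 0

/-- `P_{(g,y)}[X⋄_m = (f,x), τ_G = m]`, where the stopping rule `rG` acts on the
base path of the lamplighter chain. -/
def baseStopProb (P : Matrix V V ℝ) (Q : Matrix W W ℝ) (rG : List V → ℝ)
    (g : V → W) (y : V) (m : ℕ) (f : V → W) (x : V) : ℝ :=
  ∑ p : Fin (m+1) → V, ∑ z : V → (Fin (2*m+1) → W),
    if p (Fin.last m) = x ∧ ∀ v, lampAt p z m v = f v then
      jointWeight P Q g y p z *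
        (∏ k ∈ Finset.range m, (1 - rG (ruleHist (extendPath p) k))) *
        rG (ruleHist (extendPath p) m)
    else 0

/-- `P_{(f₀,x₀)}[X⋄_t = (f,x), τ⋄₂ = t]` for `τ⋄₂ = τ⋄ + τ_G(X_{τ⋄})`, where after
`τ⋄` the chain is restarted and run independently of the past. -/
def tauDmd2EqProb (P : Matrix V V ℝ) (Q : Matrix W W ℝ) (r : List W → ℝ) (rG : List V → ℝ)
    (f₀ : V → W) (x₀ : V) (t : ℕ) (f : V → W) (x : V) : ℝ :=
  ∑ s ∈ Finset.range (t+1), ∑ g : V → W, ∑ y : V,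
    tauDmdEqProb P Q r f₀ x₀ s g y * baseStopProb P Q rG g y (t - s) f x

/-- `P_x[τ > t]` for a stopping rule on the chain `P`. -/
def stopGTProb (P : Matrix V V ℝ) (r : List V → ℝ) (x : V) (t : ℕ) : ℝ :=
  ∑ y, notStopProbAt P r x t y

/-- `E_x[τ]` for a stopping rule on the chain `P`. -/
def expStopTime (P : Matrix V V ℝ) (r : List V → ℝ) (x : V) : ℝ :=
  ∑' t : ℕ, stopGTProb P r x t

/-- `P_x[X_τ = y]` for a stopping rule on the chain `P`. -/
def stopRuleDist (P : Matrix V V ℝ) (r : List V → ℝ) (x : V) (y : V) : ℝ :=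
  ∑' t : ℕ, stopAtProb P r x t y

/-- `t_stop`: the worst-case over starting states of the optimal expected duration of a
(randomized) stopping rule whose stopping distribution is the stationary one
(Lovász–Winkler). -/
def tStop (P : Matrix V V ℝ) (π : V → ℝ) : ℝ :=
  ⨆ x : V, sInf {e : ℝ | ∃ r : List V → ℝ, IsStoppingRule r ∧
    (∀ y, stopRuleDist P r x y = π y) ∧ expStopTime P r x = e}

/-- The path `p` visits every vertex by time `t/3`. -/
def coveredByThird {t : ℕ} (p : Fin (t+1) → V) : Prop :=
  ∀ v : V, ∃ i : Fin (t+1), (i : ℝ) ≤ (t : ℝ) / 3 ∧ p i = v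

end MarkovDefs

section TauAux

variable {W : Type*} [Fintype W] [DecidableEq W] [Nonempty W]
variable {V : Type*} [Fintype V] [DecidableEq V] [Nonempty V]

/-- Restriction of a path to an initial segment. -/
def restr {α : Type*} {n k : ℕ} (_h : k ≤ n) (ζ : Fin (n+1) → α) : Fin (k+1) → α :=
  fun i => ζ ⟨(i : ℕ), by omega⟩

lemma restr_self {α : Type*} {n : ℕ} (h : n ≤ n) (ζ : Fin (n+1) → α) : restr h ζ = ζ := by
  funext i; cases i; rfl

lemma restr_snoc {α : Type*} {n k : ℕ} (h : k ≤ n) (h' : k ≤ n+1) (η : Fin (n+1) → α) (w : α) :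
    restr h' (Fin.snoc η w) = restr h η := by
  funext i
  have hi : (i : ℕ) < n + 1 := by have := i.isLt; omega
  show (Fin.snoc η w : Fin (n+2) → α) ⟨(i : ℕ), by omega⟩ = η ⟨(i : ℕ), by omega⟩
  have : (⟨(i : ℕ), by omega⟩ : Fin (n+2)) = Fin.castSucc ⟨(i : ℕ), hi⟩ := rfl
  rw [this, Fin.snoc_castSucc]

lemma ruleHist_restr {k n : ℕ} (hk : k ≤ n) {j : ℕ} (hj : j ≤ k) (ζ : Fin (n+1) → W) :
    ruleHist (extendPath (restr hk ζ)) j = ruleHist (extendPath ζ) j := by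
  unfold ruleHist extendPath restr
  congr 1
  funext i
  have hi : (i : ℕ) ≤ j := Fin.is_le i
  exact congrArg ζ (Fin.ext (by simp; omega))

lemma stopBy_restr (r : List W → ℝ) {k n m : ℕ} (hk : k ≤ n) (hm : m ≤ k) (ζ : Fin (n+1) → W) :
    stopBy r (extendPath (restr hk ζ)) m = stopBy r (extendPath ζ) m := by
  unfold stopBy
  congr 1
  refine Finset.prod_congr rfl fun j hj => ?_
  rw [ruleHist_restr hk (by simp at hj; omega)]

lemma pathWeight_nonneg {α : Type*} [Fintype α] [DecidableEq α] {R : Matrix α α ℝ}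
    (hR : ∀ x y, 0 ≤ R x y) (x₀ : α) {t : ℕ} (p : Fin (t+1) → α) : 0 ≤ pathWeight R x₀ p := by
  unfold pathWeight
  refine mul_nonneg (by split <;> norm_num) (Finset.prod_nonneg fun i _ => hR _ _)

lemma pathWeight_snoc {α : Type*} [Fintype α] [DecidableEq α] (R : Matrix α α ℝ) (x₀ : α)
    {n : ℕ} (η : Fin (n+1) → α) (w : α) :
    pathWeight R x₀ (Fin.snoc η w) = pathWeight R x₀ η * R (η (Fin.last n)) w := by
  unfold pathWeight
  have h0 : (Fin.snoc η w : Fin (n+2) → α) 0 = η 0 := by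
    have : (0 : Fin (n+2)) = Fin.castSucc (0 : Fin (n+1)) := rfl
    rw [this, Fin.snoc_castSucc]
  rw [Fin.prod_univ_castSucc]
  have hfac : ∀ i : Fin n,
      R ((Fin.snoc η w : Fin (n+2) → α) (i.castSucc).castSucc)
        ((Fin.snoc η w : Fin (n+2) → α) (i.castSucc).succ)
      = R (η i.castSucc) (η i.succ) := by
    intro i
    rw [Fin.succ_castSucc, Fin.snoc_castSucc, Fin.snoc_castSucc]
  have hlast :
      R ((Fin.snoc η w : Fin (n+2) → α) (Fin.last n).castSucc)
        ((Fin.snoc η w : Fin (n+2) → α) (Fin.last n).succ)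
      = R (η (Fin.last n)) w := by
    rw [Fin.succ_last, Fin.snoc_castSucc, Fin.snoc_last]
  rw [Finset.prod_congr rfl fun i _ => hfac i, hlast, h0]
  ring

lemma sum_snoc {α : Type*} [Fintype α] (n : ℕ) (g : (Fin (n+2) → α) → ℝ) :
    ∑ ζ : Fin (n+2) → α, g ζ = ∑ η : Fin (n+1) → α, ∑ w : α, g (Fin.snoc η w) := by
  classical
  rw [← Equiv.sum_comp (Fin.insertNthEquiv (fun _ => α) (Fin.last (n+1))) g,
    Fintype.sum_prod_type, Finset.sum_comm]
  refine Finset.sum_congr rfl fun η _ => Finset.sum_congr rfl fun w _ => ?_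
  congr 1
  simp [Fin.insertNthEquiv, Fin.insertNth_last]

end TauAux
section TauAux2
set_option linter.unusedSectionVars false

variable {W : Type*} [Fintype W] [DecidableEq W] [Nonempty W]

lemma sum_snoc' {α : Type*} [Fintype α] (n : ℕ) (g : (Fin (n+1+1) → α) → ℝ) :
    ∑ ζ : Fin (n+1+1) → α, g ζ = ∑ η : Fin (n+1) → α, ∑ w : α, g (Fin.snoc η w) :=
  sum_snoc n g

/-- Tail of the path beyond the window of `g` integrates out. -/
lemma sum_pathWeight_restr (Q : Matrix W W ℝ) (hQ : IsTransitionMatrix Q) (w₀ : W) (n : ℕ) :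
    ∀ (d : ℕ) (g : (Fin (n+1) → W) → ℝ),
    ∑ ζ : Fin (n + d + 1) → W, pathWeight Q w₀ ζ * g (restr (Nat.le_add_right n d) ζ)
      = ∑ η : Fin (n+1) → W, pathWeight Q w₀ η * g η := by
  intro d
  induction d with
  | zero =>
    intro g
    exact Finset.sum_congr rfl fun ζ _ => by rw [restr_self]
  | succ d ih =>
    intro g
    have hstep :
        ∑ ζ : Fin ((n + d + 1) + 1) → W, pathWeight Q w₀ ζ * g (restr (by omega) ζ)
          = ∑ η : Fin (n + d + 1) → W, pathWeight Q w₀ η * g (restr (Nat.le_add_right n d) η) := by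
      rw [sum_snoc' (n + d) (fun ζ => pathWeight Q w₀ ζ * g (restr (by omega) ζ))]
      refine Finset.sum_congr rfl fun η _ => ?_
      have key : ∀ w : W,
          pathWeight Q w₀ (Fin.snoc η w) * g (restr (by omega) (Fin.snoc η w))
            = pathWeight Q w₀ η * g (restr (Nat.le_add_right n d) η) * Q (η (Fin.last (n+d))) w := by
        intro w
        rw [pathWeight_snoc, restr_snoc (Nat.le_add_right n d)]
        ring
      rw [Finset.sum_congr rfl fun w _ => key w, ← Finset.mul_sum, hQ.2, mul_one]
    exact hstep.trans (ih g)

/-- Splitting a path at an intermediate time; the remainder gives a matrix power. -/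
lemma sum_pathWeight_split (Q : Matrix W W ℝ) (w₀ : W) (k : ℕ) :
    ∀ (d : ℕ) (g : (Fin (k+1) → W) → ℝ) (w : W),
    ∑ η : Fin (k + d + 1) → W,
      (if η (Fin.last (k+d)) = w then pathWeight Q w₀ η * g (restr (Nat.le_add_right k d) η) else 0)
      = ∑ θ : Fin (k+1) → W, pathWeight Q w₀ θ * g θ * (Q ^ d) (θ (Fin.last k)) w := by
  intro d
  induction d with
  | zero =>
    intro g w
    refine Finset.sum_congr rfl fun θ _ => ?_
    rw [restr_self, pow_zero, Matrix.one_apply]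
    by_cases h : θ (Fin.last k) = w
    · rw [if_pos h, mul_one]; exact if_pos h
    · rw [if_neg h, mul_zero]; exact if_neg h
  | succ d ih =>
    intro g w
    show ∑ η : Fin ((k + d + 1) + 1) → W,
        (if η (Fin.last (k + d + 1)) = w then
          pathWeight Q w₀ η * g (restr (show k ≤ k+d+1 by omega) η) else 0)
        = ∑ θ : Fin (k+1) → W, pathWeight Q w₀ θ * g θ * (Q ^ (d+1)) (θ (Fin.last k)) w
    rw [sum_snoc' (k + d) (fun η => if η (Fin.last (k+d+1)) = w then
      pathWeight Q w₀ η * g (restr (show k ≤ k+d+1 by omega) η) else 0)]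
    have step1 : ∀ η : Fin (k+d+1) → W, ∀ w' : W,
        (if (Fin.snoc η w' : Fin (k+d+1+1) → W) (Fin.last (k+d+1)) = w then
          pathWeight Q w₀ (Fin.snoc η w') * g (restr (show k ≤ k+d+1 by omega) (Fin.snoc η w')) else 0)
        = (if w' = w then
            pathWeight Q w₀ η * g (restr (Nat.le_add_right k d) η) * Q (η (Fin.last (k+d))) w' else 0) := by
      intro η w'
      rw [Fin.snoc_last, pathWeight_snoc, restr_snoc (Nat.le_add_right k d)]
      split_ifs <;> ring
    have step2 : ∀ η : Fin (k+d+1) → W,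
        (∑ w' : W, if (Fin.snoc η w' : Fin (k+d+1+1) → W) (Fin.last (k+d+1)) = w then
          pathWeight Q w₀ (Fin.snoc η w') * g (restr (show k ≤ k+d+1 by omega) (Fin.snoc η w')) else 0)
        = ∑ u : W, (if η (Fin.last (k+d)) = u then
            pathWeight Q w₀ η * g (restr (Nat.le_add_right k d) η) else 0) * Q u w := by
      intro η
      rw [Finset.sum_congr rfl fun w' _ => step1 η w',
        Finset.sum_ite_eq' Finset.univ w
          (fun w' => pathWeight Q w₀ η * g (restr (Nat.le_add_right k d) η) * Q (η (Fin.last (k+d))) w')]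
      rw [if_pos (Finset.mem_univ w)]
      have : ∀ u : W, (if η (Fin.last (k+d)) = u then
            pathWeight Q w₀ η * g (restr (Nat.le_add_right k d) η) else 0) * Q u w
          = (if η (Fin.last (k+d)) = u then
              pathWeight Q w₀ η * g (restr (Nat.le_add_right k d) η) * Q u w else 0) := by
        intro u; split_ifs <;> ring
      rw [Finset.sum_congr rfl fun u _ => this u,
        Finset.sum_ite_eq Finset.univ (η (Fin.last (k+d)))
          (fun u => pathWeight Q w₀ η * g (restr (Nat.le_add_right k d) η) * Q u w),
        if_pos (Finset.mem_univ _)]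
    rw [Finset.sum_congr rfl fun η _ => step2 η, Finset.sum_comm]
    have step3 : ∀ u : W,
        ∑ η : Fin (k+d+1) → W, (if η (Fin.last (k+d)) = u then
            pathWeight Q w₀ η * g (restr (Nat.le_add_right k d) η) else 0) * Q u w
        = (∑ θ : Fin (k+1) → W, pathWeight Q w₀ θ * g θ * (Q ^ d) (θ (Fin.last k)) u) * Q u w := by
      intro u
      rw [← Finset.sum_mul, ih g u]
    rw [Finset.sum_congr rfl fun u _ => step3 u]
    rw [Finset.sum_congr rfl fun u _ => Finset.sum_mul Finset.univ
      (fun θ => pathWeight Q w₀ θ * g θ * (Q ^ d) (θ (Fin.last k)) u) (Q u w), Finset.sum_comm]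
    refine Finset.sum_congr rfl fun θ _ => ?_
    rw [pow_succ, Matrix.mul_apply, Finset.mul_sum]
    exact Finset.sum_congr rfl fun u _ => by ring

end TauAux2
section TauAux3
set_option linter.unusedSectionVars false

variable {W : Type*} [Fintype W] [DecidableEq W] [Nonempty W]

lemma one_sub_prod_eq (a : ℕ → ℝ) (m : ℕ) :
    1 - ∏ k ∈ Finset.range (m+1), a k
      = ∑ k ∈ Finset.range (m+1), (∏ j ∈ Finset.range k, a j) * (1 - a k) := by
  induction m with
  | zero => simp
  | succ m ih => rw [Finset.prod_range_succ, Finset.sum_range_succ, ← ih]; ring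

lemma stopBy_eq_sum (r : List W → ℝ) (zz : ℕ → W) (m : ℕ) :
    stopBy r zz m
      = ∑ k ∈ Finset.range (m+1),
          (∏ j ∈ Finset.range k, (1 - r (ruleHist zz j))) * r (ruleHist zz k) := by
  unfold stopBy
  rw [one_sub_prod_eq]
  exact Finset.sum_congr rfl fun k _ => by ring

lemma stat_pow (Q : Matrix W W ℝ) (πH : W → ℝ) (hπ : IsStationaryDist Q πH) :
    ∀ (d : ℕ) (w : W), ∑ u, πH u * (Q ^ d) u w = πH w := by
  intro d
  induction d with
  | zero => intro w; simp [Matrix.one_apply, mul_ite]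
  | succ d ih =>
    intro w
    have : ∀ u, πH u * (Q ^ (d+1)) u w = ∑ v, (πH u * (Q ^ d) u v) * Q v w := by
      intro u
      rw [pow_succ, Matrix.mul_apply, Finset.mul_sum]
      exact Finset.sum_congr rfl fun v _ => by ring
    rw [Finset.sum_congr rfl fun u _ => this u, Finset.sum_comm]
    have h2 : ∀ v, ∑ u, (πH u * (Q ^ d) u v) * Q v w = πH v * Q v w := by
      intro v; rw [← Finset.sum_mul, ih v]
    rw [Finset.sum_congr rfl fun v _ => h2 v, hπ.2.2 w]

/-- The per-time-`k` splitting step: summing the stop-at-`k` density over paths of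
length `m ≥ k` gives the total stop-at-`k` probability. -/
lemma split_step (Q : Matrix W W ℝ) (hQ : IsTransitionMatrix Q) (r : List W → ℝ)
    (w₀ : W) (k m : ℕ) (hk : k ≤ m) :
    ∑ η : Fin (m+1) → W, pathWeight Q w₀ η *
        ((∏ j ∈ Finset.range k, (1 - r (ruleHist (extendPath η) j))) * r (ruleHist (extendPath η) k))
      = ∑ u, stopAtProb Q r w₀ k u := by
  obtain ⟨d, rfl⟩ : ∃ d, m = k + d := ⟨m - k, by omega⟩
  have hrestr : ∀ η : Fin (k+d+1) → W,
      pathWeight Q w₀ η *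
        ((∏ j ∈ Finset.range k, (1 - r (ruleHist (extendPath η) j))) * r (ruleHist (extendPath η) k))
      = pathWeight Q w₀ η *
        ((∏ j ∈ Finset.range k,
            (1 - r (ruleHist (extendPath (restr (Nat.le_add_right k d) η)) j))) *
          r (ruleHist (extendPath (restr (Nat.le_add_right k d) η)) k)) := by
    intro η
    rw [ruleHist_restr (Nat.le_add_right k d) le_rfl]
    congr 2
    exact Finset.prod_congr rfl fun j hj =>
      by rw [ruleHist_restr (Nat.le_add_right k d) (by simp at hj; omega)]
  rw [Finset.sum_congr rfl fun η _ => hrestr η,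
    sum_pathWeight_restr Q hQ w₀ k d (fun θ =>
      (∏ j ∈ Finset.range k, (1 - r (ruleHist (extendPath θ) j))) * r (ruleHist (extendPath θ) k))]
  unfold stopAtProb
  rw [Finset.sum_comm]
  refine Finset.sum_congr rfl fun θ _ => ?_
  rw [Finset.sum_ite_eq Finset.univ (θ (Fin.last k)) (fun u =>
    pathWeight Q w₀ θ * (∏ j ∈ Finset.range k, (1 - r (ruleHist (extendPath θ) j)))
      * r (ruleHist (extendPath θ) k)), if_pos (Finset.mem_univ _)]
  ring

/-- The per-time-`k` splitting step with endpoint condition. -/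
lemma split_step2 (Q : Matrix W W ℝ) (hQ : IsTransitionMatrix Q) (r : List W → ℝ)
    (w₀ w : W) (k n : ℕ) (hk : k ≤ n) :
    ∑ η : Fin (n+1) → W,
        (if η (Fin.last n) = w then pathWeight Q w₀ η *
          ((∏ j ∈ Finset.range k, (1 - r (ruleHist (extendPath η) j))) *
            r (ruleHist (extendPath η) k)) else 0)
      = ∑ u, stopAtProb Q r w₀ k u * (Q ^ (n - k)) u w := by
  obtain ⟨d, rfl⟩ : ∃ d, n = k + d := ⟨n - k, by omega⟩
  have hd : k + d - k = d := by omega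
  rw [hd]
  have hrestr : ∀ η : Fin (k+d+1) → W,
      (if η (Fin.last (k+d)) = w then pathWeight Q w₀ η *
        ((∏ j ∈ Finset.range k, (1 - r (ruleHist (extendPath η) j))) *
          r (ruleHist (extendPath η) k)) else 0)
      = (if η (Fin.last (k+d)) = w then pathWeight Q w₀ η *
          ((∏ j ∈ Finset.range k,
              (1 - r (ruleHist (extendPath (restr (Nat.le_add_right k d) η)) j))) *
            r (ruleHist (extendPath (restr (Nat.le_add_right k d) η)) k)) else 0) := by
    intro η
    congr 2
    · rw [ruleHist_restr (Nat.le_add_right k d) le_rfl]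
      congr 1
      exact Finset.prod_congr rfl fun j hj =>
        by rw [ruleHist_restr (Nat.le_add_right k d) (by simp at hj; omega)]
  rw [Finset.sum_congr rfl fun η _ => hrestr η,
    sum_pathWeight_split Q w₀ k d (fun θ =>
      (∏ j ∈ Finset.range k, (1 - r (ruleHist (extendPath θ) j))) * r (ruleHist (extendPath θ) k)) w]
  unfold stopAtProb
  rw [Finset.sum_congr rfl fun u _ => Finset.sum_mul Finset.univ _ ((Q ^ d) u w), Finset.sum_comm]
  refine Finset.sum_congr rfl fun θ _ => ?_
  have : ∀ u, (if θ (Fin.last k) = u then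
        pathWeight Q w₀ θ * (∏ j ∈ Finset.range k, (1 - r (ruleHist (extendPath θ) j)))
          * r (ruleHist (extendPath θ) k) else 0) * (Q ^ d) u w
      = (if θ (Fin.last k) = u then
          pathWeight Q w₀ θ * ((∏ j ∈ Finset.range k, (1 - r (ruleHist (extendPath θ) j)))
            * r (ruleHist (extendPath θ) k)) * (Q ^ d) u w else 0) := by
    intro u; split_ifs <;> ring
  rw [Finset.sum_congr rfl fun u _ => this u,
    Finset.sum_ite_eq Finset.univ (θ (Fin.last k)) (fun u =>
      pathWeight Q w₀ θ * ((∏ j ∈ Finset.range k, (1 - r (ruleHist (extendPath θ) j)))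
        * r (ruleHist (extendPath θ) k)) * (Q ^ d) u w), if_pos (Finset.mem_univ _)]

end TauAux3
section TauAux4
set_option linter.unusedSectionVars false

variable {W : Type*} [Fintype W] [DecidableEq W] [Nonempty W]

lemma keyB (Q : Matrix W W ℝ) (hQ : IsTransitionMatrix Q) (r : List W → ℝ)
    (w₀ : W) {N m : ℕ} (hm : m ≤ N) :
    ∑ ζ : Fin (N+1) → W, pathWeight Q w₀ ζ * stopBy r (extendPath ζ) m
      = ∑ k ∈ Finset.range (m+1), ∑ u, stopAtProb Q r w₀ k u := by
  obtain ⟨d, rfl⟩ : ∃ d, N = m + d := ⟨N - m, by omega⟩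
  have h1 : ∀ ζ : Fin (m+d+1) → W,
      pathWeight Q w₀ ζ * stopBy r (extendPath ζ) m
        = pathWeight Q w₀ ζ * stopBy r (extendPath (restr (Nat.le_add_right m d) ζ)) m := by
    intro ζ; rw [stopBy_restr r (Nat.le_add_right m d) le_rfl]
  rw [Finset.sum_congr rfl fun ζ _ => h1 ζ,
    sum_pathWeight_restr Q hQ w₀ m d (fun η => stopBy r (extendPath η) m),
    Finset.sum_congr rfl fun η _ => by rw [stopBy_eq_sum, Finset.mul_sum],
    Finset.sum_comm]
  refine Finset.sum_congr rfl fun k hk => ?_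
  exact split_step Q hQ r w₀ k m (by simp at hk; omega)

lemma keyA (Q : Matrix W W ℝ) (hQ : IsTransitionMatrix Q) (πH : W → ℝ)
    (hπ : IsStationaryDist Q πH) (r : List W → ℝ) (hr : IsSST Q πH r)
    (w₀ w : W) {N n m : ℕ} (hn : n ≤ N) (hm : m ≤ n) :
    ∑ ζ : Fin (N+1) → W,
        (if ζ ⟨n, Nat.lt_succ_of_le hn⟩ = w then
          pathWeight Q w₀ ζ * stopBy r (extendPath ζ) m else 0)
      = πH w * ∑ ζ : Fin (N+1) → W, pathWeight Q w₀ ζ * stopBy r (extendPath ζ) m := by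
  rw [keyB Q hQ r w₀ (hm.trans hn)]
  obtain ⟨d, rfl⟩ : ∃ d, N = n + d := ⟨N - n, by omega⟩
  have h1 : ∀ ζ : Fin (n+d+1) → W,
      (if ζ ⟨n, Nat.lt_succ_of_le hn⟩ = w then
        pathWeight Q w₀ ζ * stopBy r (extendPath ζ) m else 0)
      = pathWeight Q w₀ ζ *
          (if (restr (Nat.le_add_right n d) ζ) (Fin.last n) = w then
            stopBy r (extendPath (restr (Nat.le_add_right n d) ζ)) m else 0) := by
    intro ζ
    rw [stopBy_restr r (Nat.le_add_right n d) hm, mul_ite, mul_zero]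
    rfl
  rw [Finset.sum_congr rfl fun ζ _ => h1 ζ,
    sum_pathWeight_restr Q hQ w₀ n d
      (fun η => if η (Fin.last n) = w then stopBy r (extendPath η) m else 0)]
  have h2 : ∀ η : Fin (n+1) → W,
      pathWeight Q w₀ η * (if η (Fin.last n) = w then stopBy r (extendPath η) m else 0)
      = ∑ k ∈ Finset.range (m+1),
          (if η (Fin.last n) = w then pathWeight Q w₀ η *
            ((∏ j ∈ Finset.range k, (1 - r (ruleHist (extendPath η) j))) *
              r (ruleHist (extendPath η) k)) else 0) := by
    intro η
    by_cases h : η (Fin.last n) = w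
    · simp only [h, if_true, if_pos]
      rw [stopBy_eq_sum, Finset.mul_sum]
    · simp [h]
  rw [Finset.sum_congr rfl fun η _ => h2 η, Finset.sum_comm]
  have h3 : ∀ k ∈ Finset.range (m+1),
      ∑ η : Fin (n+1) → W,
        (if η (Fin.last n) = w then pathWeight Q w₀ η *
          ((∏ j ∈ Finset.range k, (1 - r (ruleHist (extendPath η) j))) *
            r (ruleHist (extendPath η) k)) else 0)
      = (∑ u, stopAtProb Q r w₀ k u) * πH w := by
    intro k hk
    rw [split_step2 Q hQ r w₀ w k n (by simp at hk; omega)]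
    have h4 : ∀ u, stopAtProb Q r w₀ k u * (Q ^ (n-k)) u w
        = (∑ y, stopAtProb Q r w₀ k y) * (πH u * (Q ^ (n-k)) u w) := by
      intro u
      rw [hr.2 w₀ k u]; ring
    rw [Finset.sum_congr rfl fun u _ => h4 u, ← Finset.mul_sum,
      stat_pow Q πH hπ (n-k) w]
  rw [Finset.sum_congr rfl h3, ← Finset.sum_mul]
  ring

end TauAux4
section TauAux5
set_option linter.unusedSectionVars false

variable {V : Type*} [Fintype V] [DecidableEq V] [Nonempty V]

lemma truncPath_self {t : ℕ} (p : Fin (t+1) → V) : truncPath p t = p := by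
  funext i
  unfold truncPath
  exact congrArg p (Fin.ext (by simp [Nat.min_eq_left (Fin.is_le i)]))

lemma localTime_le_two_mul {t : ℕ} (p : Fin (t+1) → V) (v : V) : localTime p v ≤ 2 * t := by
  unfold localTime
  set c := (Finset.univ.filter fun i => p i = v).card with hc
  have hcle : c ≤ t + 1 := by
    calc c ≤ Finset.univ.card := Finset.card_filter_le _ _
    _ = t + 1 := by simp
  by_cases h : c = t + 1
  · have huniv : (Finset.univ.filter fun i => p i = v) = Finset.univ := by
      apply Finset.eq_univ_of_card
      rw [← hc, h]; simp
    have hall : ∀ i, p i = v := by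
      intro i
      have := Finset.eq_univ_iff_forall.mp huniv i
      simpa using this
    rw [if_pos (hall 0), if_pos (hall _)]
    omega
  · have h1 : c ≤ t := by omega
    calc 2 * c - (if p 0 = v then 1 else 0) - (if p (Fin.last t) = v then 1 else 0)
        ≤ 2 * c := le_trans (Nat.sub_le _ _) (Nat.sub_le _ _)
    _ ≤ 2 * t := by omega

lemma localTime_eq_sum {t : ℕ} (p : Fin (t+1) → V) (v : V) (s : ℕ) :
    localTime (truncPath p s) v
      = 2 * (∑ i ∈ Finset.range (s+1), if extendPath p i = v then 1 else 0)
        - (if extendPath p 0 = v then 1 else 0) - (if extendPath p s = v then 1 else 0) := by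
  unfold localTime
  have h1 : (Finset.univ.filter fun i => truncPath p s i = v).card
      = ∑ i ∈ Finset.range (s+1), if extendPath p i = v then 1 else 0 := by
    rw [Finset.card_filter]
    rw [← Fin.sum_univ_eq_sum_range (fun i => if extendPath p i = v then 1 else 0) (s+1)]
    rfl
  rw [h1]
  rfl

lemma localTime_trunc_mono {t : ℕ} (p : Fin (t+1) → V) (v : V) {s s' : ℕ} (h : s ≤ s') :
    localTime (truncPath p s) v ≤ localTime (truncPath p s') v := by
  rcases eq_or_lt_of_le h with rfl | hlt
  · exact le_rfl
  · rw [localTime_eq_sum, localTime_eq_sum]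
    have hAB : (∑ i ∈ Finset.range (s+1), if extendPath p i = v then 1 else 0)
          + (if extendPath p s' = v then 1 else 0)
        ≤ ∑ i ∈ Finset.range (s'+1), if extendPath p i = v then 1 else 0 := by
      have hsub : insert s' (Finset.range (s+1)) ⊆ Finset.range (s'+1) := by
        intro x hx; simp at hx ⊢; omega
      calc (∑ i ∈ Finset.range (s+1), if extendPath p i = v then 1 else 0)
            + (if extendPath p s' = v then 1 else 0)
          = ∑ i ∈ insert s' (Finset.range (s+1)), if extendPath p i = v then 1 else 0 := by
            rw [Finset.sum_insert (by simp; omega)]; ring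
      _ ≤ _ := Finset.sum_le_sum_of_subset hsub
    have hE0 : (if extendPath p 0 = v then 1 else 0)
        ≤ ∑ i ∈ Finset.range (s+1), if extendPath p i = v then 1 else 0 :=
      Finset.single_le_sum (f := fun i => if extendPath p i = v then 1 else 0)
        (fun i _ => Nat.zero_le _) (by simp)
    have hEs : (if extendPath p s = v then 1 else 0)
        ≤ ∑ i ∈ Finset.range (s+1), if extendPath p i = v then 1 else 0 :=
      Finset.single_le_sum (f := fun i => if extendPath p i = v then 1 else 0)
        (fun i _ => Nat.zero_le _) (by simp)
    omega

end TauAux5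
section TauAux6
set_option linter.unusedSectionVars false

variable {W : Type*} [Fintype W] [DecidableEq W] [Nonempty W]
variable {V : Type*} [Fintype V] [DecidableEq V] [Nonempty V]

lemma lampAt_index {t : ℕ} (p : Fin (t+1) → V) (z : V → (Fin (2*t+1) → W)) (v : V) :
    lampAt p z t v
      = z v ⟨localTime p v, Nat.lt_succ_of_le (localTime_le_two_mul p v)⟩ := by
  unfold lampAt
  exact congrArg (z v) (Fin.ext (by
    simp [truncPath_self, Nat.min_eq_left (localTime_le_two_mul p v)]))

lemma pathWeight_restr_ne_zero (Q : Matrix W W ℝ) (z₀ : W) {N n : ℕ} (hn : n ≤ N)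
    (ζ : Fin (N+1) → W) (hpw : pathWeight Q z₀ ζ ≠ 0) :
    pathWeight Q z₀ (restr hn ζ) ≠ 0 := by
  unfold pathWeight at hpw ⊢
  rcases mul_ne_zero_iff.mp hpw with ⟨h1, h2⟩
  apply mul_ne_zero
  · have : restr hn ζ 0 = ζ 0 := congrArg ζ (Fin.ext (by simp [restr]))
    rw [this]; exact h1
  · rw [Finset.prod_ne_zero_iff] at h2 ⊢
    intro i _
    have e1 : restr hn ζ i.castSucc = ζ (Fin.castSucc ⟨(i : ℕ), by omega⟩ : Fin (N+1)) :=
      congrArg ζ (Fin.ext (by simp [restr]))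
    have e2 : restr hn ζ i.succ = ζ (Fin.succ ⟨(i : ℕ), by omega⟩ : Fin (N+1)) :=
      congrArg ζ (Fin.ext (by simp [restr]))
    rw [e1, e2]
    exact h2 ⟨(i : ℕ), by omega⟩ (Finset.mem_univ _)

lemma stopBy_eq_one_of_halt (Q : Matrix W W ℝ) (hQ : IsTransitionMatrix Q)
    (r : List W → ℝ) (hrs : IsStoppingRule r) (z₀ hz : W)
    (hhalt : IsHaltingState Q r z₀ hz) {N n : ℕ} (hn : n ≤ N) (ζ : Fin (N+1) → W)
    (hend : ζ ⟨n, Nat.lt_succ_of_le hn⟩ = hz) (hpw : pathWeight Q z₀ ζ ≠ 0) :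
    stopBy r (extendPath ζ) n = 1 := by
  have hpwθ : pathWeight Q z₀ (restr hn ζ) ≠ 0 := pathWeight_restr_ne_zero Q z₀ hn ζ hpw
  have h0 := hhalt n
  unfold notStopProbAt at h0
  have hnn : ∀ θ ∈ (Finset.univ : Finset (Fin (n+1) → W)),
      0 ≤ (if θ (Fin.last n) = hz then pathWeight Q z₀ θ *
        ∏ k ∈ Finset.range (n+1), (1 - r (ruleHist (extendPath θ) k)) else 0) := by
    intro θ _
    split_ifs
    · exact mul_nonneg (pathWeight_nonneg hQ.1 z₀ θ)
        (Finset.prod_nonneg fun k _ => by have := (hrs (ruleHist (extendPath θ) k)).2; linarith)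
    · exact le_rfl
  have hterm := (Finset.sum_eq_zero_iff_of_nonneg hnn).mp h0 (restr hn ζ) (Finset.mem_univ _)
  have hlast : (restr hn ζ) (Fin.last n) = hz := hend
  rw [if_pos hlast] at hterm
  rcases mul_eq_zero.mp hterm with hbad | hprod
  · exact absurd hbad hpwθ
  · unfold stopBy
    have : ∏ k ∈ Finset.range (n+1), (1 - r (ruleHist (extendPath ζ) k)) = 0 := by
      rw [← hprod]
      exact Finset.prod_congr rfl fun k hk =>
        by rw [ruleHist_restr hn (by simp at hk; omega)]
    rw [this, sub_zero]

end TauAux6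
section TauAux7
set_option linter.unusedSectionVars false

variable {W : Type*} [Fintype W] [DecidableEq W] [Nonempty W]
variable {V : Type*} [Fintype V] [DecidableEq V] [Nonempty V]

lemma fubini_pi {β : Type*} [Fintype β] (G : V → β → ℝ) :
    ∑ z : V → β, ∏ v, G v (z v) = ∏ v, ∑ b : β, G v b := by
  rw [Finset.prod_univ_sum (fun _ => Finset.univ) G, Fintype.piFinset_univ]

lemma LE_factor (P : Matrix V V ℝ) (Q : Matrix W W ℝ) (hQ : IsTransitionMatrix Q)
    (πH : W → ℝ) (hπ : IsStationaryDist Q πH) (r : List W → ℝ) (hr : IsSST Q πH r)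
    (f₀ : V → W) (x₀ : V) (t s : ℕ) (hs : s ≤ t) (f : V → W) (x : V) :
    tauDmdLEProb P Q r f₀ x₀ t s f x = (∏ v, πH (f v)) * tauDmdLEBase P Q r f₀ x₀ t s x := by
  unfold tauDmdLEProb tauDmdLEBase
  rw [Finset.mul_sum]
  refine Finset.sum_congr rfl fun p _ => ?_
  by_cases hx : p (Fin.last t) = x
  · have key : ∀ z : V → (Fin (2*t+1) → W),
        (if p (Fin.last t) = x ∧ ∀ v, lampAt p z t v = f v then
          jointWeight P Q f₀ x₀ p z *
            ∏ v, stopBy r (extendPath (z v)) (localTime (truncPath p s) v) else 0)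
        = pathWeight P x₀ p *
            ∏ v, ((if z v ⟨localTime p v, Nat.lt_succ_of_le (localTime_le_two_mul p v)⟩ = f v
                then (1:ℝ) else 0) *
              (pathWeight Q (f₀ v) (z v) *
                stopBy r (extendPath (z v)) (localTime (truncPath p s) v))) := by
      intro z
      rw [Finset.prod_mul_distrib, Finset.prod_boole]
      unfold jointWeight
      by_cases hl : ∀ v, lampAt p z t v = f v
      · have hl' : ∀ v ∈ Finset.univ,
            z v ⟨localTime p v, Nat.lt_succ_of_le (localTime_le_two_mul p v)⟩ = f v :=
          fun v _ => ((lampAt_index p z v).symm.trans (hl v))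
        rw [if_pos ⟨hx, hl⟩, if_pos hl', Finset.prod_mul_distrib]
        ring
      · have hl' : ¬ ∀ v ∈ Finset.univ,
            z v ⟨localTime p v, Nat.lt_succ_of_le (localTime_le_two_mul p v)⟩ = f v :=
          fun hcon => hl fun v => (lampAt_index p z v).trans (hcon v (Finset.mem_univ v))
        rw [if_neg (by tauto), if_neg hl']
        ring
    have fub1 : (∑ z : V → (Fin (2*t+1) → W), ∏ v,
          ((if z v ⟨localTime p v, Nat.lt_succ_of_le (localTime_le_two_mul p v)⟩ = f v
              then (1:ℝ) else 0) *
            (pathWeight Q (f₀ v) (z v) *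
              stopBy r (extendPath (z v)) (localTime (truncPath p s) v))))
        = ∏ v, ∑ ζ : Fin (2*t+1) → W,
            ((if ζ ⟨localTime p v, Nat.lt_succ_of_le (localTime_le_two_mul p v)⟩ = f v
                then (1:ℝ) else 0) *
              (pathWeight Q (f₀ v) ζ *
                stopBy r (extendPath ζ) (localTime (truncPath p s) v))) :=
      fubini_pi (fun v ζ =>
        (if ζ ⟨localTime p v, Nat.lt_succ_of_le (localTime_le_two_mul p v)⟩ = f v
            then (1:ℝ) else 0) *
          (pathWeight Q (f₀ v) ζ * stopBy r (extendPath ζ) (localTime (truncPath p s) v)))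
    rw [Finset.sum_congr rfl fun z _ => key z, ← Finset.mul_sum, fub1]
    have hv : ∀ v ∈ (Finset.univ : Finset V),
        (∑ ζ : Fin (2*t+1) → W,
          (if ζ ⟨localTime p v, Nat.lt_succ_of_le (localTime_le_two_mul p v)⟩ = f v
              then (1:ℝ) else 0) *
            (pathWeight Q (f₀ v) ζ * stopBy r (extendPath ζ) (localTime (truncPath p s) v)))
        = πH (f v) * ∑ ζ : Fin (2*t+1) → W,
            pathWeight Q (f₀ v) ζ * stopBy r (extendPath ζ) (localTime (truncPath p s) v) := by
      intro v _
      have hb : ∀ ζ : Fin (2*t+1) → W,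
          (if ζ ⟨localTime p v, Nat.lt_succ_of_le (localTime_le_two_mul p v)⟩ = f v
              then (1:ℝ) else 0) *
            (pathWeight Q (f₀ v) ζ * stopBy r (extendPath ζ) (localTime (truncPath p s) v))
          = (if ζ ⟨localTime p v, Nat.lt_succ_of_le (localTime_le_two_mul p v)⟩ = f v
              then pathWeight Q (f₀ v) ζ * stopBy r (extendPath ζ) (localTime (truncPath p s) v)
              else 0) := by
        intro ζ; split_ifs <;> ring
      rw [Finset.sum_congr rfl fun ζ _ => hb ζ]
      have hmn : localTime (truncPath p s) v ≤ localTime p v := by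
        have h := localTime_trunc_mono p v hs
        rwa [truncPath_self] at h
      exact keyA Q hQ πH hπ r hr (f₀ v) (f v) (localTime_le_two_mul p v) hmn
    rw [Finset.prod_congr rfl hv, Finset.prod_mul_distrib]
    have rhs : ∀ z : V → (Fin (2*t+1) → W),
        (if p (Fin.last t) = x then
          jointWeight P Q f₀ x₀ p z *
            ∏ v, stopBy r (extendPath (z v)) (localTime (truncPath p s) v) else 0)
        = pathWeight P x₀ p *
            ∏ v, (pathWeight Q (f₀ v) (z v) *
              stopBy r (extendPath (z v)) (localTime (truncPath p s) v)) := by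
      intro z
      rw [if_pos hx]
      unfold jointWeight
      rw [Finset.prod_mul_distrib]
      ring
    have fub2 : (∑ z : V → (Fin (2*t+1) → W), ∏ v,
          (pathWeight Q (f₀ v) (z v) *
            stopBy r (extendPath (z v)) (localTime (truncPath p s) v)))
        = ∏ v, ∑ ζ : Fin (2*t+1) → W,
            (pathWeight Q (f₀ v) ζ *
              stopBy r (extendPath ζ) (localTime (truncPath p s) v)) :=
      fubini_pi (fun v ζ =>
        pathWeight Q (f₀ v) ζ * stopBy r (extendPath ζ) (localTime (truncPath p s) v))
    rw [Finset.sum_congr rfl fun z _ => rhs z, ← Finset.mul_sum, fub2]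
    ring
  · have h1 : ∀ z : V → (Fin (2*t+1) → W),
        (if p (Fin.last t) = x ∧ ∀ v, lampAt p z t v = f v then
          jointWeight P Q f₀ x₀ p z *
            ∏ v, stopBy r (extendPath (z v)) (localTime (truncPath p s) v) else 0) = 0 := by
      intro z; rw [if_neg (by tauto)]
    have h2 : ∀ z : V → (Fin (2*t+1) → W),
        (if p (Fin.last t) = x then
          jointWeight P Q f₀ x₀ p z *
            ∏ v, stopBy r (extendPath (z v)) (localTime (truncPath p s) v) else 0) = 0 := by
      intro z; rw [if_neg hx]
    rw [Finset.sum_congr rfl fun z _ => h1 z, Finset.sum_congr rfl fun z _ => h2 z]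
    simp

end TauAux7
/-- For any strong stationary time `τ_H` for the lamp chain (run as
conditionally independent copies on the lamp coordinates given the local times) and
`τ⋄ = inf{t : ∀ v, τ_H(v) ≤ L_v(t)}`:
`P[X⋄_t = (f,x), τ⋄ = t] = (∏_v π_H(f_v)) P[X_t = x, τ⋄ = t]`; moreover if `τ_H` has a
halting state `h(z)` for every initial state `z`, then `((h(f₀(v)))_v, y)` is a halting
state for `τ⋄` and the initial state `(f₀,x₀)`, for every `y`. -/
theorem tau_diamond_product_form {V W : Type*} [Fintype V] [DecidableEq V] [Nonempty V]
    [Fintype W] [DecidableEq W] [Nonempty W]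
    (G : SimpleGraph V) (Q : Matrix W W ℝ) (πH : W → ℝ)
    (hGconn : G.Connected) (hGreg : IsRegularGraph G)
    (hQ : IsTransitionMatrix Q) (hQirr : IsIrreducibleMC Q) (hQap : IsAperiodicMC Q)
    (hπH : IsStationaryDist Q πH) (hQrev : IsReversibleMC Q πH)
    (r : List W → ℝ) (hr : IsSST Q πH r) (f₀ : V → W) (x₀ : V) :
    (∀ (t : ℕ) (f : V → W) (x : V),
        tauDmdEqProb (lazySRW G) Q r f₀ x₀ t f x
          = (∏ v, πH (f v)) * tauDmdEqBase (lazySRW G) Q r f₀ x₀ t x) ∧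
      (∀ h : W → W, (∀ z : W, IsHaltingState Q r z (h z)) →
        ∀ (y : V) (t : ℕ),
          tauDmdGTProbAt (lazySRW G) Q r f₀ x₀ t (fun v => h (f₀ v)) y = 0) := by
  constructor
  · intro t f x
    unfold tauDmdEqProb tauDmdEqBase
    rw [LE_factor (lazySRW G) Q hQ πH hπH r hr f₀ x₀ t t le_rfl f x]
    by_cases ht : t = 0
    · rw [if_pos ht, if_pos ht]; ring
    · rw [if_neg ht, if_neg ht,
        LE_factor (lazySRW G) Q hQ πH hπH r hr f₀ x₀ t (t-1) (by omega) f x]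
      ring
  · intro h hh y t
    unfold tauDmdGTProbAt
    refine Finset.sum_eq_zero fun p _ => Finset.sum_eq_zero fun z _ => ?_
    split_ifs with hcond
    · obtain ⟨hpx, hlamp⟩ := hcond
      by_cases hw : jointWeight (lazySRW G) Q f₀ x₀ p z = 0
      · rw [hw, zero_mul]
      · have hzpw : ∀ v, pathWeight Q (f₀ v) (z v) ≠ 0 := by
          intro v h0
          apply hw
          unfold jointWeight
          exact mul_eq_zero_of_right _ (Finset.prod_eq_zero (Finset.mem_univ v) h0)
        have hstop : ∀ v ∈ Finset.univ, stopBy r (extendPath (z v)) (localTime p v) = 1 := by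
          intro v _
          refine stopBy_eq_one_of_halt Q hQ r hr.1 (f₀ v) (h (f₀ v)) (hh (f₀ v))
            (localTime_le_two_mul p v) (z v) ?_ (hzpw v)
          exact (lampAt_index p z v).symm.trans (hlamp v)
        rw [Finset.prod_eq_one hstop, sub_self, mul_zero]
    · rfl
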